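/- Define P̃₀(x) := 1, P̃₁(x) := x/√3, and for n ≥ 2, P̃_n(x) := (√(4n-2)/(n-1))·Σ_{j=0}^{n} C(n-1, n-j)·C(n-1, j)·((x-1)/2)^j·((x+1)/2)^{n-j}. Then the sequence {P̃_n}_{n=0}^{∞} is orthonormal with respect to the Sobolev inner product φ(f,g) := ½f(-1)ḡ(-1) + ½f(1)ḡ(1) + ∫_{-1}^{1} f'(x)ḡ'(x)dx; that is, φ(P̃_m, P̃_n) = δ_{mn} for all m, n ≥ 0. -/

import Mathlib

open MeasureTheory Set

/-- The renormalized Jacobi polynomials with parameters `α = β = -1`: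
`P̃₀(x) = 1`, `P̃₁(x) = x/√3`, and for `n ≥ 2`
`P̃_n(x) = (√(4n-2)/(n-1)) Σ_{j=0}^{n} C(n-1, n-j) C(n-1, j) ((x-1)/2)^j ((x+1)/2)^{n-j}`. -/
noncomputable def Ptilde : ℕ → ℝ → ℝ
  | 0 => fun _ => 1
  | 1 => fun x => x / Real.sqrt 3
  | (n + 2) => fun x =>
      (Real.sqrt (4 * ((n : ℝ) + 2) - 2) / ((n : ℝ) + 1)) *
        ∑ j ∈ Finset.range (n + 3),
          ((n + 1).choose (n + 2 - j) : ℝ) * ((n + 1).choose j : ℝ) *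
            ((x - 1) / 2) ^ j * ((x + 1) / 2) ^ (n + 2 - j)

/-- The Sobolev inner product
`φ(f,g) = ½ f(-1)g(-1) + ½ f(1)g(1) + ∫_{-1}^{1} f'(x)g'(x) dx`. -/
noncomputable def sobolevIP (f g : ℝ → ℝ) : ℝ :=
  (1 / 2) * f (-1) * g (-1) + (1 / 2) * f 1 * g 1 +
    ∫ x in Ioo (-1 : ℝ) 1, deriv f x * deriv g x

open Polynomial Finset

noncomputable def qq : ℝ[X] := X ^ 2 - Polynomial.C 1
noncomputable def ww (k : ℕ) : ℝ[X] := qq ^ k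
noncomputable def GG (k : ℕ) : ℝ[X] := derivative^[k] (ww k)

lemma ww_eq (k : ℕ) : ww k = (X - Polynomial.C 1) ^ k * (X + Polynomial.C 1) ^ k := by
  rw [ww, ← mul_pow]; congr 1; rw [qq, map_one]; ring

lemma natDegree_ww (k : ℕ) : (ww k).natDegree = 2 * k := by
  have h : qq.natDegree = 2 := by
    rw [qq]; exact natDegree_X_pow_sub_C
  rw [ww, natDegree_pow, h, mul_comm]

lemma monic_qq : qq.Monic := by
  rw [qq]; simpa using monic_X_pow_sub_C (1:ℝ) (two_ne_zero)

lemma coeff_ww (k : ℕ) : (ww k).coeff (2 * k) = 1 := by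
  have := (monic_qq.pow (n := k)).coeff_natDegree
  rwa [← ww, natDegree_ww] at this

lemma natDegree_GG_le (k : ℕ) : (GG k).natDegree ≤ k := by
  have := natDegree_iterate_derivative (ww k) k
  rwa [natDegree_ww, two_mul, Nat.add_sub_cancel] at this

/-- iterated derivative of a polynomial of degree ≤ k. -/
lemma iter_deriv_top : ∀ (k : ℕ) (p : ℝ[X]), p.natDegree ≤ k →
    derivative^[k] p = Polynomial.C ((k.factorial : ℝ) * p.coeff k)
  | 0, p, h => by
    conv_lhs => rw [Function.iterate_zero_apply, Polynomial.eq_C_of_natDegree_le_zero h]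
    simp
  | (k+1), p, h => by
    rw [Function.iterate_succ_apply, iter_deriv_top k (derivative p)
      (le_trans (natDegree_derivative_le p) (by omega)), coeff_derivative]
    push_cast [Nat.factorial_succ]
    ring_nf

lemma iter_deriv_ww_self (k : ℕ) : derivative^[2 * k] (ww k) = Polynomial.C ((2 * k).factorial : ℝ) := by
  rw [iter_deriv_top (2*k) (ww k) (natDegree_ww k).le, coeff_ww, mul_one]

/-- boundary vanishing: factor out powers of (X - C a). -/
lemma iter_deriv_factor (a : ℝ) : ∀ (i k : ℕ) (s : ℝ[X]), i ≤ k →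
    ∃ r : ℝ[X], derivative^[i] ((X - Polynomial.C a) ^ k * s) = (X - Polynomial.C a) ^ (k - i) * r
  | 0, k, s, _ => ⟨s, rfl⟩
  | (i+1), k, s, h => by
    obtain ⟨r, hr⟩ := iter_deriv_factor a i k s (by omega)
    refine ⟨Polynomial.C ((k - i : ℕ) : ℝ) * r + (X - Polynomial.C a) * derivative r, ?_⟩
    rw [Function.iterate_succ_apply', hr, derivative_mul, derivative_pow]
    have h1 : k - i - 1 = k - (i + 1) := by omega
    have h2 : k - i = (k - (i+1)) + 1 := by omega
    rw [derivative_X_sub_C, h1, h2, pow_succ]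
    ring

lemma eval_iter_deriv_ww_one {i k : ℕ} (h : i < k) : ((derivative^[i] (ww k))).eval 1 = 0 := by
  obtain ⟨r, hr⟩ := iter_deriv_factor 1 i k ((X + Polynomial.C 1) ^ k) h.le
  rw [ww_eq, hr]
  have : k - i ≠ 0 := by omega
  simp [eval_pow, zero_pow this]

lemma eval_iter_deriv_ww_negone {i k : ℕ} (h : i < k) : ((derivative^[i] (ww k))).eval (-1) = 0 := by
  obtain ⟨r, hr⟩ := iter_deriv_factor (-1) i k ((X - Polynomial.C 1) ^ k) h.le
  have hww : ww k = (X - Polynomial.C (-1)) ^ k * (X - Polynomial.C 1) ^ k := by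
    rw [ww_eq, mul_comm]; norm_num
  rw [hww, hr]
  have : k - i ≠ 0 := by omega
  simp [eval_pow, zero_pow this]

lemma pint (p : ℝ[X]) : IntervalIntegrable (fun x => p.eval x) volume (-1 : ℝ) 1 :=
  p.continuous.intervalIntegrable _ _

lemma ftc (p : ℝ[X]) (a b : ℝ) :
    ∫ x in a..b, (derivative p).eval x = p.eval b - p.eval a := by
  refine intervalIntegral.integral_deriv_eq_sub' (fun x => p.eval x) ?_ ?_ ?_
  · funext x; exact Polynomial.deriv (p := p)
  · exact fun x _ => p.differentiable.differentiableAt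
  · exact (derivative p).continuous.continuousOn

lemma parts (p q : ℝ[X]) :
    ∫ x in (-1:ℝ)..1, p.eval x * (derivative q).eval x =
      (p * q).eval 1 - (p * q).eval (-1) - ∫ x in (-1:ℝ)..1, (derivative p).eval x * q.eval x := by
  have h := ftc (p * q) (-1) 1
  rw [derivative_mul] at h
  have h2 : ∫ x in (-1:ℝ)..1, ((derivative p * q).eval x + (p * derivative q).eval x) =
      (∫ x in (-1:ℝ)..1, (derivative p * q).eval x) +
        ∫ x in (-1:ℝ)..1, (p * derivative q).eval x :=
    intervalIntegral.integral_add (pint _) (pint _)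
  simp only [eval_add] at h
  rw [h2] at h
  simp only [eval_mul]
  simp only [eval_mul] at h
  linarith

lemma step (k : ℕ) (p : ℝ[X]) : ∀ (j : ℕ), j ≤ k →
    (∫ x in (-1:ℝ)..1, p.eval x * (GG k).eval x) =
      (-1 : ℝ)^j * ∫ x in (-1:ℝ)..1, (derivative^[j] p).eval x * (derivative^[k-j] (ww k)).eval x
  | 0, _ => by simp [GG]
  | (j+1), h => by
    rw [step k p j (by omega)]
    have hkj : k - j = (k - (j+1)) + 1 := by omega
    rw [hkj, Function.iterate_succ_apply']
    rw [parts (derivative^[j] p) (derivative^[k - (j+1)] (ww k))]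
    rw [eval_mul, eval_mul, eval_iter_deriv_ww_one (by omega), eval_iter_deriv_ww_negone (by omega)]
    rw [← Function.iterate_succ_apply' derivative]
    ring

lemma GG_orth {p : ℝ[X]} {k : ℕ} (h : p.natDegree < k) :
    ∫ x in (-1:ℝ)..1, p.eval x * (GG k).eval x = 0 := by
  rw [step k p k le_rfl, iterate_derivative_eq_zero h]
  simp

lemma GG_int_zero {k : ℕ} (h : 1 ≤ k) : ∫ x in (-1:ℝ)..1, (GG k).eval x = 0 := by
  have := GG_orth (p := 1) (k := k) (by rw [natDegree_one]; omega)
  simpa using this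

noncomputable def II (k : ℕ) : ℝ := ∫ x in (-1:ℝ)..1, (ww k).eval x

lemma II_zero : II 0 = 2 := by
  simp [II, ww]
  norm_num

lemma II_rec (k : ℕ) : (2*(k:ℝ)+3) * II (k+1) = -(2*(k:ℝ)+2) * II k := by
  have hd : derivative (X * ww (k+1)) =
      Polynomial.C (2*(k:ℝ)+3) * ww (k+1) + Polynomial.C (2*(k:ℝ)+2) * ww k := by
    rw [ww, ww, qq]
    simp only [derivative_mul, derivative_X, derivative_pow, derivative_sub, derivative_X_pow,
      derivative_one, derivative_C, sub_zero, map_natCast, map_ofNat, map_add, map_mul, map_one,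
      Nat.add_sub_cancel, Nat.cast_add, Nat.cast_one]
    push_cast
    ring_nf
  have h := ftc (X * ww (k+1)) (-1) 1
  rw [hd] at h
  have hint : ∫ x in (-1:ℝ)..1,
      ((Polynomial.C (2*(k:ℝ)+3) * ww (k+1)).eval x + (Polynomial.C (2*(k:ℝ)+2) * ww k).eval x) =
      (2*(k:ℝ)+3) * II (k+1) + (2*(k:ℝ)+2) * II k := by
    rw [intervalIntegral.integral_add (pint _) (pint _)]
    simp only [eval_mul, eval_C]
    rw [intervalIntegral.integral_const_mul, intervalIntegral.integral_const_mul]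
    rfl
  simp only [eval_add] at h
  rw [hint] at h
  have e1 : (ww (k+1)).eval 1 = 0 := by simp [ww, qq]
  have e2 : (ww (k+1)).eval (-1) = 0 := by norm_num [ww, qq]
  rw [eval_mul, eval_mul, e1, e2] at h
  simp at h
  linarith

lemma II_val (k : ℕ) :
    II k = (-1:ℝ)^k * (2^(2*k+1) * (k.factorial : ℝ)^2 / ((2*k+1).factorial : ℝ)) := by
  induction k with
  | zero => simp [II_zero]
  | succ k ih =>
    have h := II_rec k
    have h3 : (2*(k:ℝ)+3) ≠ 0 := by positivity
    have hfact : ((2*(k+1)+1).factorial : ℝ) = (2*(k:ℝ)+3) * (2*(k:ℝ)+2) * ((2*k+1).factorial : ℝ) := by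
      have : 2*(k+1)+1 = (2*k+1) + 1 + 1 := by omega
      rw [this, Nat.factorial_succ, Nat.factorial_succ]
      push_cast
      ring
    have hfk : ((k+1).factorial : ℝ) = ((k:ℝ)+1) * (k.factorial : ℝ) := by
      rw [Nat.factorial_succ]; push_cast; ring
    have hne1 : ((2*k+1).factorial : ℝ) ≠ 0 := by positivity
    have key : (2*(k:ℝ)+3) * ((-1:ℝ)^(k+1) *
        (2^(2*(k+1)+1) * ((k+1).factorial : ℝ)^2 / ((2*(k+1)+1).factorial : ℝ))) =
        -(2*(k:ℝ)+2) * II k := by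
      rw [ih, hfact, hfk]
      have h2 : (2*(k+1)+1) = (2*k+1) + 2 := by omega
      rw [h2]
      field_simp
      ring
    exact mul_left_cancel₀ h3 (h.trans key.symm)

lemma GG_norm (k : ℕ) : ∫ x in (-1:ℝ)..1, (GG k).eval x * (GG k).eval x =
    ((2*k).factorial : ℝ) * (2^(2*k+1) * (k.factorial : ℝ)^2 / ((2*k+1).factorial : ℝ)) := by
  rw [step k (GG k) k le_rfl, Nat.sub_self, Function.iterate_zero_apply]
  have hGG : derivative^[k] (GG k) = Polynomial.C ((2*k).factorial : ℝ) := by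
    rw [GG, ← Function.iterate_add_apply, ← two_mul, iter_deriv_ww_self]
  rw [hGG]
  simp only [eval_C]
  rw [intervalIntegral.integral_const_mul]
  have : (∫ x in (-1:ℝ)..1, (ww k).eval x) = II k := rfl
  rw [this, II_val]
  have h1 : (-1:ℝ)^k * (-1:ℝ)^k = 1 := by rw [← mul_pow]; norm_num
  linear_combination (((2*k).factorial:ℝ) * (2^(2*k+1) * (k.factorial:ℝ)^2 / ((2*k+1).factorial:ℝ))) * h1

lemma nat_id (m j : ℕ) (hj : j ≤ m) :
    (j+1) * m.choose (j+1) * m.choose (m-j) + (m+1-j) * m.choose (m+1-j) * m.choose j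
      = m * (m.choose j * m.choose j) := by
  obtain ⟨d, rfl⟩ : ∃ d, m = j + d := ⟨m - j, by omega⟩
  have e0 : j + d - j = d := by omega
  have e1 : j + d + 1 - j = d + 1 := by omega
  have h1 : (j+d).choose d = (j+d).choose j := by
    have := Nat.choose_symm hj
    rwa [e0] at this
  have h2 : (j+d).choose (j+1) * (j+1) = (j+d).choose j * d := by
    have := Nat.choose_succ_right_eq (j+d) j
    rwa [e0] at this
  have h3 : (j+d).choose (d+1) * (d+1) = (j+d).choose d * j := by
    have := Nat.choose_succ_right_eq (j+d) d
    rwa [show j + d - d = j by omega] at this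
  rw [e0, e1, h1]
  calc (j+1) * (j+d).choose (j+1) * (j+d).choose j + (d+1) * (j+d).choose (d+1) * (j+d).choose j
      = ((j+d).choose (j+1) * (j+1)) * (j+d).choose j
        + ((j+d).choose (d+1) * (d+1)) * (j+d).choose j := by ring
    _ = ((j+d).choose j * d) * (j+d).choose j + ((j+d).choose d * j) * (j+d).choose j := by
        rw [h2, h3]
    _ = (j+d) * ((j+d).choose j * (j+d).choose j) := by rw [h1]; ring

lemma nat_id2 (m k : ℕ) (h : k ≤ m) :
    m.choose k * m.descFactorial (m-k) * m.descFactorial k = m.factorial * (m.choose k)^2 := by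
  rw [Nat.descFactorial_eq_factorial_mul_choose, Nat.descFactorial_eq_factorial_mul_choose,
    Nat.choose_symm h, ← Nat.choose_mul_factorial_mul_factorial h]
  ring

noncomputable def SS (m : ℕ) : ℝ[X] :=
  ∑ j ∈ range (m+1), Polynomial.C ((m.choose j : ℝ)^2) *
    ((X - Polynomial.C 1)^j * (X + Polynomial.C 1)^(m-j))

noncomputable def TT (m : ℕ) : ℝ[X] :=
  ∑ j ∈ range (m+2), Polynomial.C ((m.choose (m+1-j) : ℝ) * (m.choose j : ℝ)) *
    ((X - Polynomial.C 1)^j * (X + Polynomial.C 1)^(m+1-j))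

lemma derivative_TT (m : ℕ) : derivative (TT m) = Polynomial.C (m:ℝ) * SS m := by
  set A : ℝ[X] := X - Polynomial.C 1 with hA
  set B : ℝ[X] := X + Polynomial.C 1 with hB
  have hdB : derivative B = 1 := by rw [hB]; simp
  rw [TT, derivative_sum]
  have hterm : ∀ j ∈ range (m+2),
      derivative (Polynomial.C ((m.choose (m+1-j) : ℝ) * (m.choose j : ℝ)) * (A^j * B^(m+1-j)))
      = Polynomial.C ((m.choose (m+1-j) : ℝ) * (m.choose j : ℝ)) *
          (Polynomial.C (j:ℝ) * A^(j-1) * B^(m+1-j))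
        + Polynomial.C ((m.choose (m+1-j) : ℝ) * (m.choose j : ℝ)) *
          (Polynomial.C ((m+1-j : ℕ):ℝ) * A^j * B^(m+1-j-1)) := by
    intro j _
    rw [derivative_C_mul, derivative_mul, derivative_pow, derivative_pow, hA, derivative_X_sub_C,
      ← hA, hdB]
    ring
  rw [Finset.sum_congr rfl hterm, Finset.sum_add_distrib]
  have hs1 : ∑ j ∈ range (m+2),
      Polynomial.C ((m.choose (m+1-j) : ℝ) * (m.choose j : ℝ)) *
        (Polynomial.C (j:ℝ) * A^(j-1) * B^(m+1-j))
      = ∑ j ∈ range (m+1),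
        Polynomial.C ((m.choose (m-j) : ℝ) * (m.choose (j+1) : ℝ)) *
          (Polynomial.C ((j+1:ℕ):ℝ) * A^j * B^(m-j)) := by
    rw [Finset.sum_range_succ']
    simp only [Nat.cast_zero, map_zero, zero_mul, mul_zero, add_zero, Nat.add_sub_cancel]
    refine Finset.sum_congr rfl fun j hj => ?_
    have e1 : m + 1 - (j+1) = m - j := by omega
    rw [e1]
  have hs2 : ∑ j ∈ range (m+2),
      Polynomial.C ((m.choose (m+1-j) : ℝ) * (m.choose j : ℝ)) *
        (Polynomial.C ((m+1-j : ℕ):ℝ) * A^j * B^(m+1-j-1))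
      = ∑ j ∈ range (m+1),
        Polynomial.C ((m.choose (m+1-j) : ℝ) * (m.choose j : ℝ)) *
          (Polynomial.C ((m+1-j : ℕ):ℝ) * A^j * B^(m-j)) := by
    rw [Finset.sum_range_succ]
    have : m.choose (m+1-(m+1)) * ((m.choose (m+1) : ℝ)) = 0 := by
      simp [Nat.choose_eq_zero_of_lt (by omega : m < m+1)]
    simp only [Nat.add_sub_cancel_left, Nat.sub_self, Nat.choose_zero_right, Nat.choose_self, Nat.cast_one, one_mul] at this ⊢
    rw [Nat.choose_eq_zero_of_lt (by omega : m < m+1)]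
    simp only [Nat.cast_zero, map_zero, zero_mul, mul_zero, add_zero]
    refine Finset.sum_congr rfl fun j hj => ?_
    have e1 : m + 1 - j - 1 = m - j := by omega
    rw [e1]
  rw [hs1, hs2, ← Finset.sum_add_distrib, SS, Finset.mul_sum]
  refine Finset.sum_congr rfl fun j hj => ?_
  have hjm : j ≤ m := by simpa [Nat.lt_succ_iff] using hj
  have key : ((m.choose (m-j) : ℝ) * (m.choose (j+1) : ℝ)) * ((j+1:ℕ):ℝ)
      + ((m.choose (m+1-j) : ℝ) * (m.choose j : ℝ)) * ((m+1-j : ℕ):ℝ)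
      = (m:ℝ) * ((m.choose j : ℝ)^2) := by
    have h0 := nat_id m j hjm
    have h' : (((j+1) * m.choose (j+1) * m.choose (m-j)
        + (m+1-j) * m.choose (m+1-j) * m.choose j : ℕ) : ℝ)
        = ((m * (m.choose j * m.choose j) : ℕ) : ℝ) := Nat.cast_inj.mpr h0
    push_cast at h' ⊢
    linear_combination h'
  calc Polynomial.C ((m.choose (m-j) : ℝ) * (m.choose (j+1) : ℝ)) *
        (Polynomial.C ((j+1:ℕ):ℝ) * A^j * B^(m-j))
      + Polynomial.C ((m.choose (m+1-j) : ℝ) * (m.choose j : ℝ)) *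
        (Polynomial.C ((m+1-j : ℕ):ℝ) * A^j * B^(m-j))
      = Polynomial.C (((m.choose (m-j) : ℝ) * (m.choose (j+1) : ℝ)) * ((j+1:ℕ):ℝ)
          + ((m.choose (m+1-j) : ℝ) * (m.choose j : ℝ)) * ((m+1-j : ℕ):ℝ)) * (A^j * B^(m-j)) := by
        simp only [map_add, map_mul]; push_cast; ring
    _ = Polynomial.C ((m:ℝ) * ((m.choose j : ℝ)^2)) * (A^j * B^(m-j)) := by rw [key]
    _ = Polynomial.C (m:ℝ) * (Polynomial.C ((m.choose j : ℝ)^2) * (A^j * B^(m-j))) := by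
        rw [map_mul]; ring

lemma GG_eq (m : ℕ) : GG m = Polynomial.C (m.factorial : ℝ) * SS m := by
  rw [GG, ww_eq, iterate_derivative_mul]
  have hB : (X + Polynomial.C 1 : ℝ[X]) = X - Polynomial.C (-1) := by
    rw [map_neg, sub_neg_eq_add]
  rw [SS, Finset.mul_sum]
  refine Finset.sum_congr rfl fun k hk => ?_
  have hkm : k ≤ m := by simpa [Nat.lt_succ_iff] using hk
  rw [iterate_derivative_X_sub_pow, hB, iterate_derivative_X_sub_pow, ← hB]
  have e1 : m - (m - k) = k := by omega
  rw [e1]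
  rw [smul_mul_smul_comm]
  have : m.choose k * (m.descFactorial (m - k) * m.descFactorial k)
      = m.factorial * (m.choose k)^2 := by
    rw [← mul_assoc]; exact nat_id2 m k hkm
  rw [smul_smul, this, nsmul_eq_mul]
  simp only [map_pow, Polynomial.C_eq_natCast]
  push_cast
  ring

noncomputable def cst (n : ℕ) : ℝ :=
  Real.sqrt (4 * ((n : ℝ) + 2) - 2) / (((n : ℝ) + 1) * 2 ^ (n + 2))

noncomputable def Qp : ℕ → ℝ[X]
  | 0 => 1
  | 1 => Polynomial.C (Real.sqrt 3)⁻¹ * X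
  | (n + 2) => Polynomial.C (cst n) * TT (n + 1)

lemma Ptilde_eq (k : ℕ) : Ptilde k = fun x => (Qp k).eval x := by
  funext x
  match k with
  | 0 => simp [Ptilde, Qp]
  | 1 => simp [Ptilde, Qp]; rw [div_eq_inv_mul]
  | (n+2) =>
    show (Real.sqrt (4 * ((n : ℝ) + 2) - 2) / ((n : ℝ) + 1)) *
        (∑ j ∈ Finset.range (n + 3), ((n + 1).choose (n + 2 - j) : ℝ) * ((n + 1).choose j : ℝ) *
          ((x - 1) / 2) ^ j * ((x + 1) / 2) ^ (n + 2 - j)) = _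
    rw [Qp, eval_mul, eval_C, TT, eval_finset_sum, Finset.mul_sum, Finset.mul_sum]
    refine Finset.sum_congr rfl fun j hj => ?_
    have hj2 : j ≤ n + 2 := by simpa [Nat.lt_succ_iff] using hj
    simp only [eval_mul, eval_pow, eval_C, eval_sub, eval_add, eval_X, eval_one]
    rw [div_pow, div_pow, cst]
    have h2 : (2:ℝ)^j * 2^(n+2-j) = 2^(n+2) := by
      rw [← pow_add]
      congr 1
      omega
    have hne : ((n:ℝ)+1) ≠ 0 := by positivity
    field_simp
    rw [← h2]
    ring

lemma eval_TT_one (m : ℕ) : (TT m).eval 1 = 0 := by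
  rw [TT, eval_finset_sum]
  refine Finset.sum_eq_zero fun j hj => ?_
  rcases Nat.eq_zero_or_pos j with h | h
  · subst h
    simp [Nat.choose_eq_zero_of_lt (by omega : m < m + 1 - 0)]
  · simp [eval_pow, zero_pow (by omega : j ≠ 0)]

lemma eval_TT_negone (m : ℕ) : (TT m).eval (-1) = 0 := by
  rw [TT, eval_finset_sum]
  refine Finset.sum_eq_zero fun j hj => ?_
  have hj2 : j ≤ m + 1 := by simpa [Nat.lt_succ_iff] using hj
  rcases eq_or_lt_of_le hj2 with h | h
  · subst h
    simp [Nat.choose_eq_zero_of_lt (by omega : m < m + 1)]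
  · have : (-1 + 1 : ℝ) = 0 := by norm_num
    simp [eval_pow, this, zero_pow (by omega : m + 1 - j ≠ 0)]

lemma derivative_Qp2 (n : ℕ) :
    derivative (Qp (n+2)) =
      Polynomial.C (cst n * ((n:ℝ)+1) / (((n+1).factorial : ℝ))) * GG (n+1) := by
  rw [Qp, derivative_C_mul, derivative_TT, GG_eq, ← mul_assoc, ← mul_assoc, ← map_mul, ← map_mul]
  congr 1
  have hf : (((n+1).factorial : ℝ)) ≠ 0 := by positivity
  field_simp
  rw [Nat.cast_succ]

lemma sobolev_eval (p q : ℝ[X]) :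
    sobolevIP (fun x => p.eval x) (fun x => q.eval x) =
      (1/2) * p.eval (-1) * q.eval (-1) + (1/2) * p.eval 1 * q.eval 1 +
        ∫ x in (-1:ℝ)..1, (derivative p).eval x * (derivative q).eval x := by
  rw [sobolevIP]
  congr 1
  rw [intervalIntegral.integral_of_le (by norm_num : (-1:ℝ) ≤ 1),
    MeasureTheory.integral_Ioc_eq_integral_Ioo]
  refine MeasureTheory.integral_congr_ae (Filter.Eventually.of_forall fun x => ?_)
  show deriv (fun x => eval x p) x * deriv (fun x => eval x q) x = _
  rw [Polynomial.deriv, Polynomial.deriv]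

lemma int_CG_mul (a b : ℝ) (p q : ℝ[X]) :
    ∫ x in (-1:ℝ)..1, (Polynomial.C a * p).eval x * (Polynomial.C b * q).eval x =
      (a * b) * ∫ x in (-1:ℝ)..1, p.eval x * q.eval x := by
  rw [← intervalIntegral.integral_const_mul]
  refine intervalIntegral.integral_congr fun x _ => ?_
  simp only [eval_mul, eval_C]
  ring

lemma sqrt3_sq : (Real.sqrt 3)⁻¹ * (Real.sqrt 3)⁻¹ = 1/3 := by
  rw [← mul_inv]
  rw [← Real.sqrt_mul_self (by norm_num : (0:ℝ) ≤ 3)]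
  norm_num

lemma norm_one (n : ℕ) :
    (cst n * ((n:ℝ)+1) / (((n+1).factorial : ℝ))) *
        (cst n * ((n:ℝ)+1) / (((n+1).factorial : ℝ))) *
      (((2*(n+1)).factorial : ℝ) *
        (2^(2*(n+1)+1) * (((n+1).factorial : ℝ))^2 / (((2*(n+1)+1).factorial : ℝ)))) = 1 := by
  have hs : Real.sqrt (4 * ((n : ℝ) + 2) - 2) * Real.sqrt (4 * ((n : ℝ) + 2) - 2)
      = 4 * ((n : ℝ) + 2) - 2 := Real.mul_self_sqrt (by nlinarith [(Nat.cast_nonneg n : (0:ℝ) ≤ n)])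
  have hfact : ((2*(n+1)+1).factorial : ℝ) = (2*(n:ℝ)+3) * ((2*(n+1)).factorial : ℝ) := by
    have : 2*(n+1)+1 = (2*(n+1)) + 1 := rfl
    rw [this, Nat.factorial_succ]
    push_cast
    ring
  have h1 : ((n+1).factorial : ℝ) ≠ 0 := by positivity
  have h2 : ((2*(n+1)).factorial : ℝ) ≠ 0 := by positivity
  have h3 : ((n:ℝ)+1) ≠ 0 := by positivity
  have h4 : (2*(n:ℝ)+3) ≠ 0 := by positivity
  rw [cst, hfact]
  have hpow : (2:ℝ)^(2*(n+1)+1) = 2^(n+2) * 2^(n+2) / 2 := by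
    rw [← pow_add, eq_div_iff (by norm_num : (2:ℝ) ≠ 0), ← pow_succ]
    congr 1
    omega
  rw [hpow]
  field_simp
  linear_combination hs

lemma sobolev_symm (f g : ℝ → ℝ) : sobolevIP f g = sobolevIP g f := by
  unfold sobolevIP
  have : (∫ x in Ioo (-1:ℝ) 1, deriv f x * deriv g x)
      = ∫ x in Ioo (-1:ℝ) 1, deriv g x * deriv f x := by
    refine MeasureTheory.integral_congr_ae (Filter.Eventually.of_forall fun x => ?_)
    exact mul_comm _ _
  rw [this]
  ring

lemma main_le (m n : ℕ) (h : m ≤ n) :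
    sobolevIP (Ptilde m) (Ptilde n) = if m = n then 1 else 0 := by
  rw [Ptilde_eq, Ptilde_eq, sobolev_eval]
  match m, n, h with
  | 0, 0, _ => norm_num [Qp]
  | 0, 1, _ =>
    norm_num [Qp, derivative_C_mul_X]
  | 0, (k+2), _ =>
    have e1 := eval_TT_one (k+1)
    have e2 := eval_TT_negone (k+1)
    norm_num [Qp, e1, e2]
  | 1, 1, _ =>
    norm_num [Qp, derivative_C_mul_X, sqrt3_sq]
    nlinarith [sqrt3_sq]
  | 1, (k+2), _ =>
    have e1 := eval_TT_one (k+1)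
    have e2 := eval_TT_negone (k+1)
    rw [show Qp 1 = Polynomial.C (Real.sqrt 3)⁻¹ * X from rfl, derivative_C_mul_X, derivative_Qp2,
      show (Polynomial.C (Real.sqrt 3)⁻¹ : ℝ[X]) = Polynomial.C (Real.sqrt 3)⁻¹ * 1
        from (mul_one _).symm,
      int_CG_mul]
    simp only [eval_one, one_mul]
    rw [GG_int_zero (by omega : 1 ≤ k+1), mul_zero]
    norm_num [Qp, e1, e2]
  | (l+2), (k+2), h =>
    have em1 := eval_TT_one (l+1)
    have em2 := eval_TT_negone (l+1)
    have en1 := eval_TT_one (k+1)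
    have en2 := eval_TT_negone (k+1)
    rw [derivative_Qp2, derivative_Qp2, int_CG_mul,
      show Qp (l+2) = Polynomial.C (cst l) * TT (l+1) from rfl,
      show Qp (k+2) = Polynomial.C (cst k) * TT (k+1) from rfl]
    simp only [eval_mul, em1, em2, en1, en2, mul_zero, zero_mul, add_zero, zero_add]
    by_cases hlk : l = k
    · subst hlk
      rw [if_pos rfl, GG_norm]
      exact norm_one l
    · rw [if_neg (by omega : ¬ (l + 2 = k + 2)),
        GG_orth (lt_of_le_of_lt (natDegree_GG_le (l+1)) (by omega : l+1 < k+1)), mul_zero]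

/-- The Jacobi polynomials `{P̃_n^{(-1,-1)}}_{n≥0}` are orthonormal with respect to the
Sobolev inner product `φ`. -/
theorem jacobi_sobolev_orthonormal (m n : ℕ) :
    sobolevIP (Ptilde m) (Ptilde n) = if m = n then 1 else 0 := by
  rcases le_total m n with h | h
  · exact main_le m n h
  · rw [sobolev_symm, main_le n m h]
    by_cases he : m = n
    · simp [he]
    · rw [if_neg (fun a => he a.symm), if_neg he]
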